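/- If S is a (finite) k-special sequence of length at least kh + k, then the edge-coloring of T_{k,h} derived from S is nonrepetitive. -/

import Mathlib

/-- A repetition: a nonempty sequence whose first half equals its second half. -/
def IsRepetition {α : Type*} (l : List α) : Prop := ∃ w : List α, w ≠ [] ∧ l = w ++ w

/-- An edge-coloring is nonrepetitive if no path carries a repetitive color sequence. -/
def NonrepEdgeColoring {V α : Type*} (G : SimpleGraph V) (c : Sym2 V → α) : Prop :=
  ∀ u v : V, ∀ p : G.Walk u v, p.IsPath → ¬ IsRepetition (p.edges.map c)

/-- The Thue chromatic index: minimum number of colors in a nonrepetitive edge-coloring. -/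
noncomputable def thueIdx {V : Type*} (G : SimpleGraph V) : ℕ :=
  sInf {n | ∃ c : Sym2 V → ℕ, (∀ e ∈ G.edgeSet, c e < n) ∧ NonrepEdgeColoring G c}

/-- `i 1, …, i (2r)` (1-indexed) is a `k`-bad index sequence for the 1-indexed sequence `S`,
with turning index `m`: the symbols form a repetition, the indices strictly decrease up to
position `m` and then strictly increase, consecutive indices differ by at most `k`, and the
gap at the turn is strictly less than `k` when the turn is internal. -/
def KBadIdx {α : Type*} (k : ℕ) (S : ℕ → α) (r m : ℕ) (i : ℕ → ℕ) : Prop :=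
  1 ≤ r ∧ 1 < m ∧ m ≤ 2 * r ∧
  (∀ j, 1 ≤ j → j ≤ r → S (i j) = S (i (j + r))) ∧
  (∀ j, 1 ≤ j → j < m → i (j + 1) < i j) ∧
  (∀ j, m ≤ j → j < 2 * r → i j < i (j + 1)) ∧
  (∀ j, 1 ≤ j → j < 2 * r → i (j + 1) ≤ i j + k ∧ i j ≤ i (j + 1) + k) ∧
  (m < 2 * r → i (m + 1) < i m + k)

/-- A finite sequence `S` (1-indexed, of length `n`) is `k`-special if it admits no
`k`-bad index sequence with all indices in `{1, …, n}`. -/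
def KSpecialFin {α : Type*} (k : ℕ) (S : ℕ → α) (n : ℕ) : Prop :=
  ¬ ∃ r m i, KBadIdx k S r m i ∧ ∀ j, 1 ≤ j → j ≤ 2 * r → 1 ≤ i j ∧ i j ≤ n

/-- An infinite sequence `S` (1-indexed) is `k`-special if it admits no `k`-bad index
sequence. -/
def KSpecialInf {α : Type*} (k : ℕ) (S : ℕ → α) : Prop :=
  ¬ ∃ r m i, KBadIdx k S r m i ∧ ∀ j, 1 ≤ j → j ≤ 2 * r → 1 ≤ i j

/-- The sequence `S_{n,c} = 1, 2, …, n, 1, 2, …, c` (1-indexed; entry at position `i` is `i`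
for `i ≤ n` and `i - n` for `i > n`). -/
def Snc (n : ℕ) (c : ℕ) : ℕ → ℕ := fun i => if i ≤ n then i else i - n

/-- The infinite `k`-ary tree: vertices are finite words over `Fin k` (the root is `[]`,
and the children of `v`, in left-to-right order, are `j :: v` for `j : Fin k`). -/
def kTree (k : ℕ) : SimpleGraph (List (Fin k)) :=
  SimpleGraph.fromRel (fun u v => ∃ j : Fin k, u = j :: v)

/-- The (1-based) position in the defining sequence of the color of the edge joining a
non-root vertex to its parent: the edges from the root get positions `1, …, k` left to
right, and if the edge from `v` to its parent has position `i`, then the edges to the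
children of `v` get positions `i + 1, …, i + k` left to right. -/
def edgeIdx {k : ℕ} : List (Fin k) → ℕ
  | [] => 0
  | j :: v => edgeIdx v + (j : ℕ) + 1

/-- The edge-coloring of the infinite `k`-ary tree derived from the 1-indexed sequence `S`. -/
def derivedColoring (k : ℕ) (S : ℕ → ℕ) : Sym2 (List (Fin k)) → ℕ :=
  Sym2.lift ⟨fun u v =>
    if v.length < u.length then S (edgeIdx u)
    else if u.length < v.length then S (edgeIdx v) else 0, by
      intro u v
      rcases lt_trichotomy u.length v.length with h | h | h <;>
        (beta_reduce; split_ifs <;> first | rfl | omega)⟩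

namespace Stmt13Aux

lemma edgeIdx_le {k : ℕ} : ∀ l : List (Fin k), edgeIdx l ≤ k * l.length
  | [] => by simp [edgeIdx]
  | j :: v => by
    have h1 := edgeIdx_le v
    have h2 : (j : ℕ) < k := j.isLt
    have h3 : k * (v.length + 1) = k * v.length + k := by ring
    simp only [edgeIdx, List.length_cons]
    omega

lemma walk_get {V : Type*} {G : SimpleGraph V} {u v : V} (p : G.Walk u v) :
    ∀ (t : ℕ), t < p.length →
      G.Adj (p.support.getD t v) (p.support.getD (t + 1) v) ∧
      ∀ e₀, p.edges.getD t e₀ = s(p.support.getD t v, p.support.getD (t + 1) v) := by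
  induction p with
  | nil => intro t ht; simp at ht
  | @cons u w v hadj q ih =>
    intro t ht
    cases t with
    | zero =>
      have hq : (SimpleGraph.Walk.cons hadj q).support.getD 1 v = w := by
        rw [SimpleGraph.Walk.support_cons]
        show q.support.getD 0 v = w
        rw [q.support_eq_cons]; rfl
      have hu : (SimpleGraph.Walk.cons hadj q).support.getD 0 v = u := by
        rw [SimpleGraph.Walk.support_cons]; rfl
      rw [hu, hq]
      exact ⟨hadj, fun e₀ => by rw [SimpleGraph.Walk.edges_cons]; rfl⟩
    | succ t =>
      have ht' : t < q.length := by
        simpa [SimpleGraph.Walk.length_cons] using Nat.lt_of_succ_lt_succ ht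
      obtain ⟨h1, h2⟩ := ih t ht'
      constructor
      · simpa [SimpleGraph.Walk.support_cons] using h1
      · intro e₀
        simpa [SimpleGraph.Walk.support_cons, SimpleGraph.Walk.edges_cons] using h2 e₀

lemma valley_aux (k L r p : ℕ) (S : ℕ → ℕ) (i : ℕ → ℕ) (hr : 1 ≤ r) (hp : p ≤ 2*r)
    (A : ∀ j, 1 ≤ j → j < p → i (j+1) < i j ∧ i j ≤ i (j+1) + k)
    (B : ∀ j, p < j → j < 2*r → i j < i (j+1) ∧ i (j+1) ≤ i j + k)
    (C : 1 ≤ p → p < 2*r → i p ≠ i (p+1) ∧ i (p+1) < i p + k ∧ i p < i (p+1) + k)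
    (D : ∀ j, 1 ≤ j → j ≤ r → S (i j) = S (i (j+r)))
    (E : ∀ j, 1 ≤ j → j ≤ 2*r → 1 ≤ i j ∧ i j ≤ L)
    (hcase : p = 2*r ∨ (2 ≤ p ∧ p < 2*r ∧ i p < i (p+1)) ∨ (1 ≤ p ∧ p + 1 = 2*r ∧ i (p+1) < i p)) :
    ∃ r' m i', KBadIdx k S r' m i' ∧ ∀ j, 1 ≤ j → j ≤ 2 * r' → 1 ≤ i' j ∧ i' j ≤ L := by
  rcases hcase with h | ⟨hp2, hplt, hlt⟩ | ⟨hp1, hpn, hlt⟩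
  · -- all decreasing, m = 2r
    subst h
    refine ⟨r, 2*r, i, ⟨hr, by omega, le_refl _, D, ?_, ?_, ?_, ?_⟩, E⟩
    · intro j hj1 hj2; exact (A j hj1 hj2).1
    · intro j hj1 hj2; omega
    · intro j hj1 hj2
      obtain ⟨ha, hb⟩ := A j hj1 hj2; omega
    · intro hm; omega
  · -- m = p
    refine ⟨r, p, i, ⟨hr, by omega, by omega, D, ?_, ?_, ?_, ?_⟩, E⟩
    · intro j hj1 hj2; exact (A j hj1 hj2).1
    · intro j hj1 hj2
      rcases eq_or_lt_of_le hj1 with h | h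
      · rw [← h]; exact hlt
      · exact (B j h hj2).1
    · intro j hj1 hj2
      rcases lt_trichotomy j p with h | h | h
      · obtain ⟨ha, hb⟩ := A j hj1 h; omega
      · subst h
        obtain ⟨ha, hb, hc⟩ := C (by omega) hplt; omega
      · obtain ⟨ha, hb⟩ := B j h hj2; omega
    · intro hm
      exact (C (by omega) hplt).2.1
  · -- m = 2r = p + 1
    refine ⟨r, 2*r, i, ⟨hr, by omega, le_refl _, D, ?_, ?_, ?_, ?_⟩, E⟩
    · intro j hj1 hj2
      rcases lt_trichotomy j p with h | h | h
      · exact (A j hj1 h).1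
      · subst h; exact hlt
      · omega
    · intro j hj1 hj2; omega
    · intro j hj1 hj2
      rcases lt_trichotomy j p with h | h | h
      · obtain ⟨ha, hb⟩ := A j hj1 h; omega
      · subst h
        obtain ⟨ha, hb, hc⟩ := C hp1 (by omega); omega
      · omega
    · intro hm; omega

lemma valley (k L r p : ℕ) (S : ℕ → ℕ) (i : ℕ → ℕ) (hr : 1 ≤ r) (hp : p ≤ 2*r)
    (A : ∀ j, 1 ≤ j → j < p → i (j+1) < i j ∧ i j ≤ i (j+1) + k)
    (B : ∀ j, p < j → j < 2*r → i j < i (j+1) ∧ i (j+1) ≤ i j + k)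
    (C : 1 ≤ p → p < 2*r → i p ≠ i (p+1) ∧ i (p+1) < i p + k ∧ i p < i (p+1) + k)
    (D : ∀ j, 1 ≤ j → j ≤ r → S (i j) = S (i (j+r)))
    (E : ∀ j, 1 ≤ j → j ≤ 2*r → 1 ≤ i j ∧ i j ≤ L) :
    ∃ r' m i', KBadIdx k S r' m i' ∧ ∀ j, 1 ≤ j → j ≤ 2 * r' → 1 ≤ i' j ∧ i' j ≤ L := by
  -- the reversed configuration
  set i' : ℕ → ℕ := fun j => i (2*r + 1 - j) with hi'
  have A' : ∀ j, 1 ≤ j → j < 2*r - p → i' (j+1) < i' j ∧ i' j ≤ i' (j+1) + k := by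
    intro j hj1 hj2
    have e1 : 2*r + 1 - (j+1) = 2*r - j := by omega
    have e2 : 2*r + 1 - j = (2*r - j) + 1 := by omega
    simp only [hi', e1, e2]
    exact B (2*r - j) (by omega) (by omega)
  have B' : ∀ j, 2*r - p < j → j < 2*r → i' j < i' (j+1) ∧ i' (j+1) ≤ i' j + k := by
    intro j hj1 hj2
    have e1 : 2*r + 1 - (j+1) = 2*r - j := by omega
    have e2 : 2*r + 1 - j = (2*r - j) + 1 := by omega
    simp only [hi', e1, e2]
    obtain ⟨ha, hb⟩ := A (2*r - j) (by omega) (by omega)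
    exact ⟨ha, hb⟩
  have C' : 1 ≤ 2*r - p → 2*r - p < 2*r →
      i' (2*r - p) ≠ i' (2*r - p + 1) ∧ i' (2*r - p + 1) < i' (2*r - p) + k ∧
      i' (2*r - p) < i' (2*r - p + 1) + k := by
    intro h1 h2
    have e1 : 2*r + 1 - (2*r - p) = p + 1 := by omega
    have e2 : 2*r + 1 - (2*r - p + 1) = p := by omega
    simp only [hi', e1, e2]
    obtain ⟨ha, hb, hc⟩ := C (by omega) (by omega)
    exact ⟨ha.symm, hc, hb⟩
  have D' : ∀ j, 1 ≤ j → j ≤ r → S (i' j) = S (i' (j+r)) := by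
    intro j hj1 hj2
    have e1 : 2*r + 1 - j = (r + 1 - j) + r := by omega
    have e2 : 2*r + 1 - (j + r) = r + 1 - j := by omega
    simp only [hi', e1, e2]
    exact (D (r + 1 - j) (by omega) (by omega)).symm
  have E' : ∀ j, 1 ≤ j → j ≤ 2*r → 1 ≤ i' j ∧ i' j ≤ L := by
    intro j hj1 hj2
    exact E (2*r + 1 - j) (by omega) (by omega)
  rcases eq_or_lt_of_le hp with hpeq | hplt
  · exact valley_aux k L r p S i hr hp A B C D E (Or.inl hpeq)
  rcases Nat.eq_zero_or_pos p with hp0 | hp1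
  · refine valley_aux k L r (2*r) S i' hr (le_refl _) ?_ ?_ ?_ D' E' (Or.inl rfl)
    · intro j hj1 hj2; exact A' j hj1 (by omega)
    · intro j hj1 hj2; omega
    · intro h1 h2; omega
  · obtain ⟨hne, hb, hc⟩ := C hp1 hplt
    rcases hne.lt_or_gt with hlt | hlt
    · rcases eq_or_lt_of_le (Nat.succ_le_of_lt hp1 : 1 ≤ p) with hpe | hpe
      · -- p = 1, reversed, case 3
        refine valley_aux k L r (2*r - p) S i' hr (by omega) A' B' C' D' E'
          (Or.inr (Or.inr ⟨by omega, by omega, ?_⟩))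
        have e1 : 2*r + 1 - (2*r - p) = p + 1 := by omega
        have e2 : 2*r + 1 - (2*r - p + 1) = p := by omega
        simp only [hi', e1, e2]
        exact hlt
      · exact valley_aux k L r p S i hr hp A B C D E
          (Or.inr (Or.inl ⟨by omega, hplt, hlt⟩))
    · rcases eq_or_lt_of_le (by omega : p + 1 ≤ 2*r) with hpe | hpe
      · exact valley_aux k L r p S i hr hp A B C D E
          (Or.inr (Or.inr ⟨hp1, hpe, hlt⟩))
      · -- reversed, case 2
        refine valley_aux k L r (2*r - p) S i' hr (by omega) A' B' C' D' E'
          (Or.inr (Or.inl ⟨by omega, by omega, ?_⟩))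
        have e1 : 2*r + 1 - (2*r - p) = p + 1 := by omega
        have e2 : 2*r + 1 - (2*r - p + 1) = p := by omega
        simp only [hi', e1, e2]
        exact hlt

end Stmt13Aux

/-- If `S` is a finite `k`-special sequence of length `L ≥ kh + k`, then the edge-coloring
of the complete `k`-ary tree of height `h` (the vertices of the infinite `k`-ary tree at
distance at most `h` from the root) derived from `S` is nonrepetitive. -/
theorem stmt13 (k h L : ℕ) (hk : 1 ≤ k) (S : ℕ → ℕ) (hL : k * h + k ≤ L)
    (hspec : KSpecialFin k S L) :
    NonrepEdgeColoring ((kTree k).induce {l : List (Fin k) | l.length ≤ h})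
      (fun e => derivedColoring k S (e.map Subtype.val)) := by
  classical
  intro u v p hp hrep
  obtain ⟨w, hwne, hw⟩ := hrep
  set r := w.length with hrdef
  have hr : 1 ≤ r := by rw [hrdef]; exact List.length_pos_iff.mpr hwne
  have hlen : p.length = 2 * r := by
    have hh := congrArg List.length hw
    simp only [List.length_map, SimpleGraph.Walk.length_edges, List.length_append] at hh
    omega
  set Vt : ℕ → List (Fin k) := fun t => (p.support.getD t v).val with hVt
  set i : ℕ → ℕ := fun j => max (edgeIdx (Vt (j-1))) (edgeIdx (Vt j)) with hidef
  have hVlen : ∀ t, (Vt t).length ≤ h := fun t => (p.support.getD t v).2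
  have step : ∀ t, t < p.length →
      (∃ a : Fin k, Vt t = a :: Vt (t+1)) ∨ (∃ a : Fin k, Vt (t+1) = a :: Vt t) := by
    intro t ht
    have hadj := (Stmt13Aux.walk_get p t ht).1
    have h2 : (kTree k).Adj (Vt t) (Vt (t+1)) := hadj
    rw [kTree, SimpleGraph.fromRel_adj] at h2
    exact h2.2
  have hnodup := hp.support_nodup
  have vinj : ∀ t1 t2, t1 ≤ p.length → t2 ≤ p.length → Vt t1 = Vt t2 → t1 = t2 := by
    intro t1 t2 h1 h2 he
    have l1 : t1 < p.support.length := by rw [SimpleGraph.Walk.length_support]; omega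
    have l2 : t2 < p.support.length := by rw [SimpleGraph.Walk.length_support]; omega
    have he2 : p.support.getD t1 v = p.support.getD t2 v := Subtype.ext he
    rw [List.getD_eq_getElem _ _ l1, List.getD_eq_getElem _ _ l2] at he2
    exact hnodup.getElem_inj_iff.mp he2
  have hi_up : ∀ t (a : Fin k), Vt t = a :: Vt (t+1) → i (t+1) = edgeIdx (Vt t) := by
    intro t a ha
    have h3 : edgeIdx (Vt t) = edgeIdx (Vt (t+1)) + a + 1 := by rw [ha]; rfl
    have h4 : i (t+1) = max (edgeIdx (Vt (t+1-1))) (edgeIdx (Vt (t+1))) := rfl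
    rw [h4, Nat.add_sub_cancel]
    exact Nat.max_eq_left (by omega)
  have hi_down : ∀ t (a : Fin k), Vt (t+1) = a :: Vt t → i (t+1) = edgeIdx (Vt (t+1)) := by
    intro t a ha
    have h3 : edgeIdx (Vt (t+1)) = edgeIdx (Vt t) + a + 1 := by rw [ha]; rfl
    have h4 : i (t+1) = max (edgeIdx (Vt (t+1-1))) (edgeIdx (Vt (t+1))) := rfl
    rw [h4, Nat.add_sub_cancel]
    exact Nat.max_eq_right (by omega)
  have hcolor : ∀ t, t < p.length →
      (p.edges.map (fun e => derivedColoring k S (e.map Subtype.val))).getD t 0 = S (i (t+1)) := by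
    intro t ht
    have hedges : t < p.edges.length := by rw [SimpleGraph.Walk.length_edges]; omega
    have hlt : t < (p.edges.map (fun e => derivedColoring k S (e.map Subtype.val))).length := by
      rw [List.length_map]; exact hedges
    have hedge := (Stmt13Aux.walk_get p t ht).2 (p.edges[t]'hedges)
    rw [List.getD_eq_getElem _ _ hedges] at hedge
    rw [List.getD_eq_getElem _ _ hlt, List.getElem_map, hedge]
    show derivedColoring k S (Sym2.map Subtype.val s(_, _)) = _
    rw [Sym2.map_pair_eq]
    show derivedColoring k S s(Vt t, Vt (t+1)) = _
    rcases step t ht with ⟨a, ha⟩ | ⟨a, ha⟩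
    · rw [hi_up t a ha, derivedColoring, Sym2.lift_mk]
      have h1 : (Vt (t+1)).length < (Vt t).length := by rw [ha, List.length_cons]; omega
      simp [h1]
    · rw [hi_down t a ha, derivedColoring, Sym2.lift_mk]
      have h1 : (Vt t).length < (Vt (t+1)).length := by rw [ha, List.length_cons]; omega
      have h2 : ¬ ((Vt (t+1)).length < (Vt t).length) := by omega
      simp [h1, h2]
  have hPex : ∃ t, p.length ≤ t ∨ ∃ a : Fin k, Vt (t+1) = a :: Vt t := ⟨p.length, Or.inl le_rfl⟩
  set pstar := Nat.find hPex with hpstar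
  have hple : pstar ≤ p.length := Nat.find_le (Or.inl le_rfl)
  have hup : ∀ t, t < pstar → ∃ a : Fin k, Vt t = a :: Vt (t+1) := by
    intro t ht
    have hmin := Nat.find_min hPex ht
    push_neg at hmin
    rcases step t (by omega) with hh | hh
    · exact hh
    · obtain ⟨a, ha⟩ := hh
      exact absurd ha (hmin.2 a)
  have hdown : ∀ t, pstar ≤ t → t < p.length → ∃ a : Fin k, Vt (t+1) = a :: Vt t := by
    intro t
    induction t with
    | zero =>
      intro h1 h2
      have hs := Nat.find_spec hPex
      rw [← hpstar] at hs
      have : pstar = 0 := by omega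
      rw [this] at hs
      rcases hs with hs | hs
      · omega
      · exact hs
    | succ t ih =>
      intro h1 h2
      rcases eq_or_lt_of_le h1 with he | hlt
      · have hs := Nat.find_spec hPex
        rw [← hpstar, he] at hs
        rcases hs with hs | hs
        · omega
        · exact hs
      · have hdt := ih (by omega) (by omega)
        rcases step (t+1) h2 with ⟨a, ha⟩ | hh
        · obtain ⟨b, hb⟩ := hdt
          rw [ha] at hb
          have heq : Vt (t+1+1) = Vt t := ((List.cons.injEq _ _ _ _).mp hb).2
          have := vinj (t+1+1) t (by omega) (by omega) heq
          omega
        · exact hh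
  -- the five hypotheses of the valley lemma
  have A : ∀ j, 1 ≤ j → j < pstar → i (j+1) < i j ∧ i j ≤ i (j+1) + k := by
    intro j hj1 hj2
    obtain ⟨a, ha⟩ := hup (j-1) (by omega)
    obtain ⟨b, hb⟩ := hup j (by omega)
    have h1 : i (j-1+1) = edgeIdx (Vt (j-1)) := hi_up (j-1) a ha
    have e1 : j - 1 + 1 = j := by omega
    rw [e1] at h1 ha
    have h2 : i (j+1) = edgeIdx (Vt j) := hi_up j b hb
    have h3 : edgeIdx (Vt (j-1)) = edgeIdx (Vt j) + a + 1 := by rw [ha]; rfl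
    have h4 : (a : ℕ) < k := a.isLt
    omega
  have B : ∀ j, pstar < j → j < p.length → i j < i (j+1) ∧ i (j+1) ≤ i j + k := by
    intro j hj1 hj2
    obtain ⟨a, ha⟩ := hdown (j-1) (by omega) (by omega)
    obtain ⟨b, hb⟩ := hdown j (by omega) hj2
    have h1 : i (j-1+1) = edgeIdx (Vt (j-1+1)) := hi_down (j-1) a ha
    have e1 : j - 1 + 1 = j := by omega
    rw [e1] at h1
    have h2 : i (j+1) = edgeIdx (Vt (j+1)) := hi_down j b hb
    have h3 : edgeIdx (Vt (j+1)) = edgeIdx (Vt j) + b + 1 := by rw [hb]; rfl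
    have h4 : (b : ℕ) < k := b.isLt
    omega
  have C : 1 ≤ pstar → pstar < p.length →
      i pstar ≠ i (pstar+1) ∧ i (pstar+1) < i pstar + k ∧ i pstar < i (pstar+1) + k := by
    intro h1 h2
    obtain ⟨a, ha⟩ := hup (pstar-1) (by omega)
    obtain ⟨b, hb⟩ := hdown pstar le_rfl h2
    have hia : i (pstar-1+1) = edgeIdx (Vt (pstar-1)) := hi_up (pstar-1) a ha
    have e1 : pstar - 1 + 1 = pstar := by omega
    rw [e1] at hia ha
    have hib : i (pstar+1) = edgeIdx (Vt (pstar+1)) := hi_down pstar b hb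
    have h3 : edgeIdx (Vt (pstar-1)) = edgeIdx (Vt pstar) + a + 1 := by rw [ha]; rfl
    have h4 : edgeIdx (Vt (pstar+1)) = edgeIdx (Vt pstar) + b + 1 := by rw [hb]; rfl
    have hab : (a : ℕ) ≠ (b : ℕ) := by
      intro hco
      have hfin : a = b := Fin.ext hco
      rw [hfin] at ha
      have heq : Vt (pstar-1) = Vt (pstar+1) := by rw [ha, hb]
      have := vinj (pstar-1) (pstar+1) (by omega) (by omega) heq
      omega
    have h5 : (a : ℕ) < k := a.isLt
    have h6 : (b : ℕ) < k := b.isLt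
    omega
  have key : ∀ t1 t2, t1 < r → t2 < 2*r → t2 = t1 + r →
      (p.edges.map (fun e => derivedColoring k S (e.map Subtype.val))).getD t1 0 =
      (p.edges.map (fun e => derivedColoring k S (e.map Subtype.val))).getD t2 0 := by
    intro t1 t2 ht1 ht2 hte
    rw [hw]
    rw [List.getD_eq_getElem _ _ (by simp only [List.length_append]; omega),
        List.getD_eq_getElem _ _ (by simp only [List.length_append]; omega),
        List.getElem_append_left (by omega), List.getElem_append_right (by omega)]
    congr 1
    omega
  have D : ∀ j, 1 ≤ j → j ≤ r → S (i j) = S (i (j+r)) := by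
    intro j hj1 hj2
    have hc1 := hcolor (j-1) (by omega)
    have hc2 := hcolor (j-1+r) (by omega)
    have e1 : j - 1 + 1 = j := by omega
    have e2 : j - 1 + r + 1 = j + r := by omega
    rw [e1] at hc1
    rw [e2] at hc2
    rw [← hc1, ← hc2]
    exact key (j-1) (j-1+r) (by omega) (by omega) (by omega)
  have E : ∀ j, 1 ≤ j → j ≤ p.length → 1 ≤ i j ∧ i j ≤ L := by
    intro j hj1 hj2
    constructor
    · rcases step (j-1) (by omega) with ⟨a, ha⟩ | ⟨a, ha⟩
      · have h1 : i (j-1+1) = edgeIdx (Vt (j-1)) := hi_up (j-1) a ha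
        have e1 : j - 1 + 1 = j := by omega
        rw [e1] at h1 ha
        have h3 : edgeIdx (Vt (j-1)) = edgeIdx (Vt j) + a + 1 := by rw [ha]; rfl
        omega
      · have h1 : i (j-1+1) = edgeIdx (Vt (j-1+1)) := hi_down (j-1) a ha
        have e1 : j - 1 + 1 = j := by omega
        rw [e1] at h1 ha
        have h3 : edgeIdx (Vt j) = edgeIdx (Vt (j-1)) + a + 1 := by rw [ha]; rfl
        omega
    · have hb1 : edgeIdx (Vt (j-1)) ≤ k * h := by
        calc edgeIdx (Vt (j-1)) ≤ k * (Vt (j-1)).length := Stmt13Aux.edgeIdx_le _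
        _ ≤ k * h := Nat.mul_le_mul_left k (hVlen (j-1))
      have hb2 : edgeIdx (Vt j) ≤ k * h := by
        calc edgeIdx (Vt j) ≤ k * (Vt j).length := Stmt13Aux.edgeIdx_le _
        _ ≤ k * h := Nat.mul_le_mul_left k (hVlen j)
      have : i j = max (edgeIdx (Vt (j-1))) (edgeIdx (Vt j)) := rfl
      omega
  refine hspec (Stmt13Aux.valley k L r pstar S i hr (by omega) A ?_ ?_ D ?_)
  · intro j hj1 hj2; exact B j hj1 (by omega)
  · intro h1 h2; exact C h1 (by omega)
  · intro j hj1 hj2; exact E j hj1 (by omega)
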